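/- arXiv:2002.09959 — 9 statements merged into one kernel-verified Lean document; each statement's English description precedes it below -/
import Mathlib

section
/- The 1-forms α = (f_y + 1) η³, β = (f_y + 1) η² + 2 f_p η³, and δ = −(f_y − 1) η¹ are the unique smooth 1-forms on Σ satisfying the first structure equations dη¹ = α∧η² + β∧η³, dη² = −α∧η¹ + δ∧η³, dη³ = −β∧η¹ − δ∧η²; i.e. the skew-symmetric matrix θ with θ¹₂ = −α, θ¹₃ = −β, θ²₃ = −δ is the connection form of the Levi-Civita connection of g in the orthonormal coframe (η¹, η², η³). -/
/-!
Concrete model of the geometry of a second order ODE  y'' = f(x, y, y')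
on Σ = ℝ³ with coordinates (x, y, p):

* a vector field is given by its components w.r.t. (∂x, ∂y, ∂p);
* a 1-form by its components w.r.t. (dx, dy, dp);
* a 2-form by its components w.r.t. (dy∧dp, dp∧dx, dx∧dy);
* a 3-form by its coefficient w.r.t. dx∧dy∧dp.
-/

noncomputable section

/-- Points of Σ = ℝ³ with coordinates (x, y, p). -/
abbrev Pt : Type := ℝ × ℝ × ℝ

/-- Componentwise dot product of triples. -/
def dot (a b : Pt) : ℝ := a.1 * b.1 + a.2.1 * b.2.1 + a.2.2 * b.2.2

/-- Componentwise cross product of triples. -/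
def cross (a b : Pt) : Pt :=
  (a.2.1 * b.2.2 - a.2.2 * b.2.1,
   a.2.2 * b.1 - a.1 * b.2.2,
   a.1 * b.2.1 - a.2.1 * b.1)

/-- Partial derivative ∂/∂x. -/
def pdx (F : Pt → ℝ) (q : Pt) : ℝ := fderiv ℝ F q (1, 0, 0)
/-- Partial derivative ∂/∂y. -/
def pdy (F : Pt → ℝ) (q : Pt) : ℝ := fderiv ℝ F q (0, 1, 0)
/-- Partial derivative ∂/∂p. -/
def pdp (F : Pt → ℝ) (q : Pt) : ℝ := fderiv ℝ F q (0, 0, 1)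

/-- A 1-form: components w.r.t. (dx, dy, dp). -/
abbrev Form1 : Type := Pt → Pt
/-- A 2-form: components w.r.t. (dy∧dp, dp∧dx, dx∧dy). -/
abbrev Form2 : Type := Pt → Pt
/-- A 3-form: coefficient w.r.t. dx∧dy∧dp. -/
abbrev Form3 : Type := Pt → ℝ
/-- A vector field: components w.r.t. (∂x, ∂y, ∂p). -/
abbrev VF : Type := Pt → Pt

/-- Smoothness (C^∞) of a real function on Σ. -/
def SmoothFn (F : Pt → ℝ) : Prop := ContDiff ℝ (⊤ : ℕ∞) F
/-- Smoothness (C^∞) of a vector field on Σ. -/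
def SmoothVF (X : VF) : Prop := ContDiff ℝ (⊤ : ℕ∞) X
/-- Smoothness (C^∞) of a 1-form on Σ. -/
def SmoothForm1 (ω : Form1) : Prop := ContDiff ℝ (⊤ : ℕ∞) ω

/-- Exterior derivative of a function. -/
def dFun (F : Pt → ℝ) : Form1 := fun q => (pdx F q, pdy F q, pdp F q)

/-- Exterior derivative of a 1-form (the "curl", in the bases above). -/
def d1 (ω : Form1) : Form2 := fun q =>
  (pdy (fun r => (ω r).2.2) q - pdp (fun r => (ω r).2.1) q,
   pdp (fun r => (ω r).1) q - pdx (fun r => (ω r).2.2) q,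
   pdx (fun r => (ω r).2.1) q - pdy (fun r => (ω r).1) q)

/-- Wedge product of two 1-forms. -/
def w11 (ω τ : Form1) : Form2 := fun q => cross (ω q) (τ q)

/-- Wedge product of a 1-form and a 2-form. -/
def w12 (ω : Form1) (σ : Form2) : Form3 := fun q => dot (ω q) (σ q)

/-- Evaluation of a 1-form on a vector field. -/
def ev1 (ω : Form1) (X : VF) : Pt → ℝ := fun q => dot (ω q) (X q)

/-- Evaluation of a 2-form on a pair of vector fields. -/
def ev2 (σ : Form2) (X Y : VF) : Pt → ℝ := fun q => dot (σ q) (cross (X q) (Y q))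

/-- Lie bracket of vector fields: [X,Y]^i = X^j ∂_j Y^i − Y^j ∂_j X^i. -/
def lie (X Y : VF) : VF := fun q => fderiv ℝ Y q (X q) - fderiv ℝ X q (Y q)

/-- Derivative of a function along a vector field: X(F). -/
def vderiv (X : VF) (F : Pt → ℝ) : Pt → ℝ := fun q => fderiv ℝ F q (X q)

/-- η¹ = (1/2) dx. -/
def η1 : Form1 := fun _ => (1/2, 0, 0)
/-- η² = (1/2)(dy − p dx). -/
def η2 : Form1 := fun q => (-q.2.2/2, 1/2, 0)
/-- η³ = (1/2)(dp − f dx). -/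
def η3 (f : Pt → ℝ) : Form1 := fun q => (-f q/2, 0, 1/2)

/-- ξ₁ = 2(∂x + p ∂y + f ∂p). -/
def ξ1 (f : Pt → ℝ) : VF := fun q => (2, 2 * q.2.2, 2 * f q)
/-- ξ₂ = 2 ∂y. -/
def ξ2 : VF := fun _ => (0, 2, 0)
/-- ξ₃ = 2 ∂p. -/
def ξ3 : VF := fun _ => (0, 0, 2)

/-- Pointwise value of the Riemannian metric g = η¹⊗η¹ + η²⊗η² + η³⊗η³. -/
def gVal (f : Pt → ℝ) (q : Pt) (v w : Pt) : ℝ :=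
  dot (η1 q) v * dot (η1 q) w + dot (η2 q) v * dot (η2 q) w +
    dot (η3 f q) v * dot (η3 f q) w

/-- The metric applied to vector fields. -/
def gMet (f : Pt → ℝ) (X Y : VF) : Pt → ℝ := fun q => gVal f q (X q) (Y q)

/-- The volume form vol_g = η¹ ∧ η² ∧ η³. -/
def volg (f : Pt → ℝ) : Form3 := w12 η1 (w11 η2 (η3 f))

/-- Pointwise action of the (1,1)-tensor φ = η³⊗ξ₁ − η¹⊗ξ₃. -/
def phiAt (f : Pt → ℝ) (q : Pt) (v : Pt) : Pt :=
  dot (η3 f q) v • ξ1 f q - dot (η1 q) v • ξ3 q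

/-- The tensor φ applied to a vector field. -/
def phi (f : Pt → ℝ) (X : VF) : VF := fun q => phiAt f q (X q)

/-- The Koszul expression, equal to 2·g(∇_X Y, Z) for the Levi-Civita connection ∇ of g. -/
def koszul (f : Pt → ℝ) (X Y Z : VF) : Pt → ℝ := fun q =>
  vderiv X (gMet f Y Z) q + vderiv Y (gMet f X Z) q - vderiv Z (gMet f X Y) q
    + gMet f (lie X Y) Z q - gMet f (lie X Z) Y q - gMet f (lie Y Z) X q

/-- The Levi-Civita connection of g, recovered from the Koszul formula through the
    g-orthonormal frame (ξ₁, ξ₂, ξ₃): ∇_X Y = Σ_k g(∇_X Y, ξ_k) ξ_k. -/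
def nabla (f : Pt → ℝ) (X Y : VF) : VF := fun q =>
  (koszul f X Y (ξ1 f) q / 2) • ξ1 f q + (koszul f X Y ξ2 q / 2) • ξ2 q
    + (koszul f X Y ξ3 q / 2) • ξ3 q

/-- The g-gradient of a function, through the g-orthonormal frame (ξ₁, ξ₂, ξ₃):
    ∇F = Σ_k (ξ_k F) ξ_k, the unique field with g(∇F, X) = dF(X). -/
def grad (f : Pt → ℝ) (F : Pt → ℝ) : VF := fun q =>
  vderiv (ξ1 f) F q • ξ1 f q + vderiv ξ2 F q • ξ2 q + vderiv ξ3 F q • ξ3 q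

/-- The cross product of g: the unique field with g(X ×_g Y, Z) = vol_g(X, Y, Z),
    recovered through the g-orthonormal frame (ξ₁, ξ₂, ξ₃). -/
def crossg (f : Pt → ℝ) (X Y : VF) : VF := fun q =>
  (volg f q * dot (cross (X q) (Y q)) (ξ1 f q)) • ξ1 f q
    + (volg f q * dot (cross (X q) (Y q)) (ξ2 q)) • ξ2 q
    + (volg f q * dot (cross (X q) (Y q)) (ξ3 q)) • ξ3 q

/-- The connection 1-form α = (f_y + 1) η³. -/
def alph (f : Pt → ℝ) : Form1 := fun q => (pdy f q + 1) • η3 f q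
/-- The connection 1-form β = (f_y + 1) η² + 2 f_p η³. -/
def bet (f : Pt → ℝ) : Form1 := fun q => (pdy f q + 1) • η2 q + (2 * pdp f q) • η3 f q
/-- The connection 1-form δ = −(f_y − 1) η¹. -/
def delt (f : Pt → ℝ) : Form1 := fun q => (-(pdy f q - 1)) • η1 q

/-- The first structure equations dη_g = −θ ∧ η_g for the skew-symmetric matrix θ with
θ¹₂ = −α, θ¹₃ = −β, θ²₃ = −δ, i.e. dη¹ = α∧η² + β∧η³, dη² = −α∧η¹ + δ∧η³,
dη³ = −β∧η¹ − δ∧η². -/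
def FirstStructureEqs (f : Pt → ℝ) (α β δ : Form1) : Prop :=
  (∀ q, d1 η1 q = w11 α η2 q + w11 β (η3 f) q) ∧
  (∀ q, d1 η2 q = -(w11 α η1 q) + w11 δ (η3 f) q) ∧
  (∀ q, d1 (η3 f) q = -(w11 β η1 q) - w11 δ η2 q)


/- ======================= auxiliary lemmas ======================= -/

lemma hasF_p' (q : Pt) : HasFDerivAt (fun r : Pt => -r.2.2/2)
    ((-(1:ℝ)/2) • ((ContinuousLinearMap.snd ℝ ℝ ℝ).comp (ContinuousLinearMap.snd ℝ ℝ (ℝ×ℝ)))) q := by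
  have h : HasFDerivAt (fun r : Pt => r.2.2)
      ((ContinuousLinearMap.snd ℝ ℝ ℝ).comp (ContinuousLinearMap.snd ℝ ℝ (ℝ×ℝ))) q :=
    (hasFDerivAt_snd (𝕜:=ℝ) (E:=ℝ) (F:=ℝ)).comp q (hasFDerivAt_snd (𝕜:=ℝ) (E:=ℝ) (F:=ℝ×ℝ))
  have h2 := h.const_mul ((-1:ℝ)/2)
  have he : (fun r : Pt => -r.2.2/2) = fun r : Pt => ((-1:ℝ)/2) * r.2.2 := by funext r; ring
  rw [he]; exact h2

lemma pdp_negp (q : Pt) : pdp (fun r : Pt => -r.2.2/2) q = -(1/2) := by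
  rw [pdp, (hasF_p' q).fderiv]; norm_num
lemma pdx_negp (q : Pt) : pdx (fun r : Pt => -r.2.2/2) q = 0 := by
  rw [pdx, (hasF_p' q).fderiv]; norm_num
lemma pdy_negp (q : Pt) : pdy (fun r : Pt => -r.2.2/2) q = 0 := by
  rw [pdy, (hasF_p' q).fderiv]; norm_num

lemma pd_negf (f : Pt → ℝ) (hf : ContDiff ℝ (⊤ : ℕ∞) f) (q : Pt) (v : Pt) :
    fderiv ℝ (fun r : Pt => -f r/2) q v = -(fderiv ℝ f q v)/2 := by
  have hd : HasFDerivAt f (fderiv ℝ f q) q :=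
    (hf.differentiable (by simp) q).hasFDerivAt
  have h := hd.const_mul ((-1:ℝ)/2)
  have he : (fun r : Pt => -f r/2) = fun r => ((-1:ℝ)/2) * f r := by funext r; ring
  rw [he, h.fderiv]; simp; ring

lemma d1_eta1 (q : Pt) : d1 η1 q = (0, 0, 0) := by
  simp [d1, η1, pdx, pdy, pdp]

lemma fderiv_negp (q v : Pt) : fderiv ℝ (fun r : Pt => -r.2.2/2) q v = -v.2.2/2 := by
  rw [(hasF_p' q).fderiv]; simp; ring

lemma d1_eta2 (q : Pt) : d1 η2 q = (0, -(1/2), 0) := by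
  simp only [d1, η2]
  simp [pdx, pdy, pdp, fderiv_negp]
  norm_num

lemma d1_eta3 (f : Pt → ℝ) (hf : ContDiff ℝ (⊤ : ℕ∞) f) (q : Pt) :
    d1 (η3 f) q = (0, -(pdp f q)/2, (pdy f q)/2) := by
  have hp : pdp (fun r : Pt => -f r/2) q = -(pdp f q)/2 := pd_negf f hf q _
  have hy : pdy (fun r : Pt => -f r/2) q = -(pdy f q)/2 := pd_negf f hf q _
  show (pdy (fun _ : Pt => (1:ℝ)/2) q - pdp (fun _ : Pt => (0:ℝ)) q,
        pdp (fun r : Pt => -f r/2) q - pdx (fun _ : Pt => (1:ℝ)/2) q,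
        pdx (fun _ : Pt => (0:ℝ)) q - pdy (fun r : Pt => -f r/2) q) = _
  rw [hp, hy]
  simp [pdx, pdy, pdp, Prod.mk.injEq, neg_div]

lemma smooth_pd (f : Pt → ℝ) (hf : ContDiff ℝ (⊤ : ℕ∞) f) (v : Pt) :
    ContDiff ℝ (⊤ : ℕ∞) (fun q => fderiv ℝ f q v) :=
  (hf.fderiv_right (by exact_mod_cast le_top)).clm_apply contDiff_const

/-- α = (f_y+1)η³, β = (f_y+1)η² + 2f_p η³, δ = −(f_y−1)η¹ are the unique
smooth 1-forms satisfying the first structure equations; i.e. the skew-symmetric matrix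
θ built from them is the connection form of the Levi-Civita connection of g in the
orthonormal coframe (η¹, η², η³). -/
theorem connection_form (f : Pt → ℝ) (hf : ContDiff ℝ (⊤ : ℕ∞) f) :
    (SmoothForm1 (alph f) ∧ SmoothForm1 (bet f) ∧ SmoothForm1 (delt f) ∧
      FirstStructureEqs f (alph f) (bet f) (delt f)) ∧
    (∀ α β δ : Form1, SmoothForm1 α → SmoothForm1 β → SmoothForm1 δ →
      FirstStructureEqs f α β δ → α = alph f ∧ β = bet f ∧ δ = delt f) := by
  constructor
  · have hfy : ContDiff ℝ (⊤ : ℕ∞) (pdy f) := smooth_pd f hf _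
    have hfp : ContDiff ℝ (⊤ : ℕ∞) (pdp f) := smooth_pd f hf _
    refine ⟨?_, ?_, ?_, ?_, ?_, ?_⟩
    · have : alph f = fun q => ((pdy f q + 1) * (-f q/2), 0, (pdy f q + 1) * (1/2)) := by
        funext q; simp [alph, η3, Prod.smul_mk, smul_eq_mul]
      rw [SmoothForm1, this]
      exact ((hfy.add contDiff_const).mul ((hf.neg).div_const 2)).prodMk
        (contDiff_const.prodMk ((hfy.add contDiff_const).mul contDiff_const))
    · have : bet f = fun q => ((pdy f q + 1) * (-q.2.2/2) + 2 * pdp f q * (-f q/2),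
          (pdy f q + 1) * (1/2), 2 * pdp f q * (1/2)) := by
        funext q; simp [bet, η2, η3, Prod.smul_mk, smul_eq_mul, Prod.mk_add_mk]
      rw [SmoothForm1, this]
      have hp : ContDiff ℝ (⊤ : ℕ∞) (fun q : Pt => q.2.2) :=
        (contDiff_snd.comp contDiff_snd)
      exact (((hfy.add contDiff_const).mul (hp.neg.div_const 2)).add
          ((contDiff_const.mul hfp).mul (hf.neg.div_const 2))).prodMk
        (((hfy.add contDiff_const).mul contDiff_const).prodMk
          ((contDiff_const.mul hfp).mul contDiff_const))
    · have : delt f = fun q => ((-(pdy f q - 1)) * (1/2), 0, 0) := by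
        funext q; simp [delt, η1, Prod.smul_mk, smul_eq_mul]
      rw [SmoothForm1, this]
      exact (((hfy.sub contDiff_const).neg).mul contDiff_const).prodMk
        (contDiff_const.prodMk contDiff_const)
    · intro q
      rw [d1_eta1]
      simp only [w11, cross, alph, bet, η1, η2, η3, Prod.smul_mk, smul_eq_mul,
        Prod.mk_add_mk, Prod.mk.injEq]
      refine ⟨by ring, by ring, by ring⟩
    · intro q
      rw [d1_eta2]
      simp only [w11, cross, alph, delt, η1, η2, η3, Prod.smul_mk, smul_eq_mul,
        Prod.mk_add_mk, Prod.neg_mk, Prod.mk.injEq]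
      refine ⟨by ring, by ring, by ring⟩
    · intro q
      rw [d1_eta3 f hf]
      simp only [w11, cross, bet, delt, η1, η2, η3, Prod.smul_mk, smul_eq_mul,
        Prod.mk_add_mk, Prod.neg_mk, Prod.mk_sub_mk, Prod.mk.injEq]
      refine ⟨by ring, by ring, by ring⟩
  · intro α β δ hα hβ hδ h
    obtain ⟨h1, h2, h3⟩ := h
    have key : ∀ q, α q = alph f q ∧ β q = bet f q ∧ δ q = delt f q := by
      intro q
      have e1 := h1 q
      have e2 := h2 q
      have e3 := h3 q
      rw [d1_eta1] at e1
      rw [d1_eta2] at e2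
      rw [d1_eta3 f hf] at e3
      rcases hA : α q with ⟨A1, A2, A3⟩
      rcases hB : β q with ⟨B1, B2, B3⟩
      rcases hD : δ q with ⟨D1, D2, D3⟩
      simp only [w11, cross, η1, η2, η3, Prod.mk_add_mk, Prod.neg_mk, Prod.mk_sub_mk,
        Prod.mk.injEq, hA, hB, hD] at e1 e2 e3
      obtain ⟨e1a, e1b, e1c⟩ := e1
      obtain ⟨e2a, e2b, e2c⟩ := e2
      obtain ⟨e3a, e3b, e3c⟩ := e3
      simp only [alph, bet, delt, η1, η2, η3, Prod.smul_mk, smul_eq_mul,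
        Prod.mk_add_mk, Prod.mk.injEq]
      refine ⟨⟨?_, ?_, ?_⟩, ⟨?_, ?_, ?_⟩, ?_, ?_, ?_⟩
      · linear_combination (-2)*e1c - q.2.2*((-2)*e2c + 2*(f q)*e2a)
          - (f q)*(e2b - e3c - e1a + (f q)*e3a - q.2.2*e2a)
      · linear_combination (-2)*e2c + 2*(f q)*e2a
      · linear_combination e2b - e3c + e1a + (f q)*e3a - q.2.2*e2a
      · linear_combination 2*e1b - q.2.2*(e2b - e3c + e1a + (f q)*e3a - q.2.2*e2a)
          - (f q)*(2*e3b - 2*q.2.2*e3a)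
      · linear_combination e2b - e3c - e1a + (f q)*e3a - q.2.2*e2a
      · linear_combination 2*e3b - 2*q.2.2*e3a
      · linear_combination e2b + e3c - e1a + (f q)*e3a + q.2.2*e2a
      · linear_combination (-2)*e2a
      · linear_combination (-2)*e3a
    exact ⟨funext fun q => (key q).1, funext fun q => (key q).2.1,
      funext fun q => (key q).2.2⟩
end
end

section
/- The Levi-Civita connection ∇ of g acts on the orthonormal frame (ξ₁, ξ₂, ξ₃) by: ∇_{ξ₁}ξ₁ = 0, ∇_{ξ₁}ξ₂ = −(f_y − 1)ξ₃, ∇_{ξ₁}ξ₃ = (f_y − 1)ξ₂, ∇_{ξ₂}ξ₁ = (f_y + 1)ξ₃, ∇_{ξ₂}ξ₂ = 0, ∇_{ξ₂}ξ₃ = −(f_y + 1)ξ₁, ∇_{ξ₃}ξ₁ = (f_y + 1)ξ₂ + 2 f_p ξ₃, ∇_{ξ₃}ξ₂ = −(f_y + 1)ξ₁, ∇_{ξ₃}ξ₃ = −2 f_p ξ₁. -/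
/-!
Concrete model of the geometry of a second order ODE  y'' = f(x, y, y')
on Σ = ℝ³ with coordinates (x, y, p):

* a vector field is given by its components w.r.t. (∂x, ∂y, ∂p);
* a 1-form by its components w.r.t. (dx, dy, dp);
* a 2-form by its components w.r.t. (dy∧dp, dp∧dx, dx∧dy);
* a 3-form by its coefficient w.r.t. dx∧dy∧dp.
-/

noncomputable section

/-- `IsLC f X Y W` says that W = ∇_X Y for the Levi-Civita connection ∇ of g, expressed
through the Koszul formula: 2 g(W, Z) = Koszul(X, Y, Z) for all smooth vector fields Z. -/
def IsLC (f : Pt → ℝ) (X Y W : VF) : Prop :=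
  ∀ Z : VF, SmoothVF Z → ∀ q, 2 * gVal f q (W q) (Z q) = koszul f X Y Z q


lemma lin_eval (L : Pt →L[ℝ] ℝ) (v : Pt) :
    L v = v.1 * L (1,0,0) + v.2.1 * L (0,1,0) + v.2.2 * L (0,0,1) := by
  have hv : v = v.1 • ((1:ℝ),(0:ℝ),(0:ℝ)) + v.2.1 • ((0:ℝ),(1:ℝ),(0:ℝ))
      + v.2.2 • ((0:ℝ),(0:ℝ),(1:ℝ)) := by
    simp [Prod.ext_iff]
  conv_lhs => rw [hv]
  simp only [map_add, map_smul, smul_eq_mul]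

lemma lin_evalP (L : Pt →L[ℝ] Pt) (v : Pt) :
    L v = v.1 • L (1,0,0) + v.2.1 • L (0,1,0) + v.2.2 • L (0,0,1) := by
  have hv : v = v.1 • ((1:ℝ),(0:ℝ),(0:ℝ)) + v.2.1 • ((0:ℝ),(1:ℝ),(0:ℝ))
      + v.2.2 • ((0:ℝ),(0:ℝ),(1:ℝ)) := by
    simp [Prod.ext_iff]
  conv_lhs => rw [hv]
  simp only [map_add, map_smul]

lemma fderiv_xi1 (f : Pt → ℝ) (hf : ContDiff ℝ (⊤ : ℕ∞) f) (q v : Pt) :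
    fderiv ℝ (ξ1 f) q v = (0, 2*v.2.2, 2*fderiv ℝ f q v) := by
  have h2 : HasFDerivAt (fun r : Pt => 2 * r.2.2)
      ((2:ℝ) • ((ContinuousLinearMap.snd ℝ ℝ ℝ).comp (ContinuousLinearMap.snd ℝ ℝ (ℝ×ℝ)))) q :=
    (hasFDerivAt_snd.snd).const_mul 2
  have h3 : HasFDerivAt (fun r : Pt => 2 * f r) ((2:ℝ) • fderiv ℝ f q) q :=
    ((hf.differentiable (by norm_num) q).hasFDerivAt).const_mul 2
  have hD := HasFDerivAt.prodMk (hasFDerivAt_const (2:ℝ) q) (h2.prodMk h3)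
  have e : fderiv ℝ (ξ1 f) q = (ContinuousLinearMap.prod 0
      (((2:ℝ) • (ContinuousLinearMap.snd ℝ ℝ ℝ).comp (ContinuousLinearMap.snd ℝ ℝ (ℝ × ℝ))).prod
        ((2:ℝ) • fderiv ℝ f q))) := hD.fderiv
  rw [e]
  simp

lemma gmet_11 (f : Pt → ℝ) : gMet f (ξ1 f) (ξ1 f) = fun _ => 1 := by
  funext r; simp [gMet, gVal, dot, η1, η2, η3, ξ1] <;> ring
lemma gmet_12 (f : Pt → ℝ) : gMet f (ξ1 f) ξ2 = fun _ => 0 := by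
  funext r; simp [gMet, gVal, dot, η1, η2, η3, ξ1, ξ2] <;> ring
lemma gmet_13 (f : Pt → ℝ) : gMet f (ξ1 f) ξ3 = fun _ => 0 := by
  funext r; simp [gMet, gVal, dot, η1, η2, η3, ξ1, ξ3] <;> ring
lemma gmet_21 (f : Pt → ℝ) : gMet f ξ2 (ξ1 f) = fun _ => 0 := by
  funext r; simp [gMet, gVal, dot, η1, η2, η3, ξ1, ξ2] <;> ring
lemma gmet_22 (f : Pt → ℝ) : gMet f ξ2 ξ2 = fun _ => 1 := by
  funext r; simp [gMet, gVal, dot, η1, η2, η3, ξ2] <;> ring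
lemma gmet_23 (f : Pt → ℝ) : gMet f ξ2 ξ3 = fun _ => 0 := by
  funext r; simp [gMet, gVal, dot, η1, η2, η3, ξ2, ξ3] <;> ring
lemma gmet_31 (f : Pt → ℝ) : gMet f ξ3 (ξ1 f) = fun _ => 0 := by
  funext r; simp [gMet, gVal, dot, η1, η2, η3, ξ1, ξ3] <;> ring
lemma gmet_32 (f : Pt → ℝ) : gMet f ξ3 ξ2 = fun _ => 0 := by
  funext r; simp [gMet, gVal, dot, η1, η2, η3, ξ2, ξ3] <;> ring
lemma gmet_33 (f : Pt → ℝ) : gMet f ξ3 ξ3 = fun _ => 1 := by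
  funext r; simp [gMet, gVal, dot, η1, η2, η3, ξ3] <;> ring

lemma dG1 (f : Pt → ℝ) (Z : VF) (hZ : SmoothVF Z) (q v : Pt) :
    fderiv ℝ (gMet f (ξ1 f) Z) q v = (fderiv ℝ Z q v).1 / 2 := by
  have h : gMet f (ξ1 f) Z = fun r => (1/2 : ℝ) * (Z r).1 := by
    funext r; simp [gMet, gVal, dot, η1, η2, η3, ξ1] <;> ring
  rw [h]
  have hD := (((hZ.differentiable (by norm_num) q).hasFDerivAt).fst).const_mul (1/2 : ℝ)
  rw [hD.fderiv]
  simp; ring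

lemma dG2 (f : Pt → ℝ) (Z : VF) (hZ : SmoothVF Z) (q v : Pt) :
    fderiv ℝ (gMet f ξ2 Z) q v =
      ((fderiv ℝ Z q v).2.1 - q.2.2 * (fderiv ℝ Z q v).1 - (Z q).1 * v.2.2) / 2 := by
  have h : gMet f ξ2 Z = fun r => (1/2 : ℝ) * ((Z r).2.1 - r.2.2 * (Z r).1) := by
    funext r; simp [gMet, gVal, dot, η1, η2, η3, ξ2] <;> ring
  rw [h]
  have hZq := (hZ.differentiable (by norm_num) q).hasFDerivAt
  have hD := ((hZq.snd.fst.sub ((hasFDerivAt_snd.snd).mul hZq.fst)).const_mul (1/2 : ℝ))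
  rw [HasFDerivAt.fderiv (f := fun r : Pt => (1/2 : ℝ) * ((Z r).2.1 - r.2.2 * (Z r).1)) hD]
  simp; ring

lemma dG3 (f : Pt → ℝ) (hf : ContDiff ℝ (⊤ : ℕ∞) f) (Z : VF) (hZ : SmoothVF Z) (q v : Pt) :
    fderiv ℝ (gMet f ξ3 Z) q v =
      ((fderiv ℝ Z q v).2.2 - f q * (fderiv ℝ Z q v).1 - (Z q).1 * fderiv ℝ f q v) / 2 := by
  have h : gMet f ξ3 Z = fun r => (1/2 : ℝ) * ((Z r).2.2 - f r * (Z r).1) := by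
    funext r; simp [gMet, gVal, dot, η1, η2, η3, ξ3] <;> ring
  rw [h]
  have hZq := (hZ.differentiable (by norm_num) q).hasFDerivAt
  have hfq := (hf.differentiable (by norm_num) q).hasFDerivAt
  have hD := ((hZq.snd.snd.sub (hfq.mul hZq.fst)).const_mul (1/2 : ℝ))
  rw [HasFDerivAt.fderiv (f := fun r : Pt => (1/2 : ℝ) * ((Z r).2.2 - f r * (Z r).1)) hD]
  simp; ring

lemma lie_1Z (f : Pt → ℝ) (hf : ContDiff ℝ (⊤ : ℕ∞) f) (Z : VF) (q : Pt) :
    lie (ξ1 f) Z q = fderiv ℝ Z q (ξ1 f q) - (0, 2*(Z q).2.2, 2*fderiv ℝ f q (Z q)) := by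
  simp [lie, fderiv_xi1 f hf q (Z q)]

lemma fderiv_xi2 (q : Pt) : fderiv ℝ ξ2 q = 0 := fderiv_const_apply _
lemma fderiv_xi3 (q : Pt) : fderiv ℝ ξ3 q = 0 := fderiv_const_apply _

lemma lie_2Z (Z : VF) (q : Pt) : lie ξ2 Z q = fderiv ℝ Z q (ξ2 q) := by
  simp [lie, ξ2, fderiv_xi2]

lemma lie_3Z (Z : VF) (q : Pt) : lie ξ3 Z q = fderiv ℝ Z q (ξ3 q) := by
  simp [lie, ξ3, fderiv_xi3]

lemma lie_12 (f : Pt → ℝ) (hf : ContDiff ℝ (⊤ : ℕ∞) f) (q : Pt) :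
    lie (ξ1 f) ξ2 q = (0, 0, -(4 * fderiv ℝ f q (0,1,0))) := by
  have h := fderiv_xi1 f hf q ((0:ℝ),(2:ℝ),(0:ℝ))
  have h2 := lin_eval (fderiv ℝ f q) ((0:ℝ),(2:ℝ),(0:ℝ))
  simp [lie, ξ2, fderiv_xi2, h, h2, Prod.ext_iff] <;> (first | ring | norm_num)

lemma lie_13 (f : Pt → ℝ) (hf : ContDiff ℝ (⊤ : ℕ∞) f) (q : Pt) :
    lie (ξ1 f) ξ3 q = (0, -4, -(4 * fderiv ℝ f q (0,0,1))) := by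
  have h := fderiv_xi1 f hf q ((0:ℝ),(0:ℝ),(2:ℝ))
  have h2 := lin_eval (fderiv ℝ f q) ((0:ℝ),(0:ℝ),(2:ℝ))
  have h3 : lie (ξ1 f) ξ3 q = -(fderiv ℝ (ξ1 f) q ((0:ℝ),(0:ℝ),(2:ℝ))) := by
    simp [lie, ξ3, fderiv_xi3]
  rw [h3, h]
  simp [Prod.ext_iff, h2]
  constructor
  · norm_num
  · ring

lemma lie_23 (q : Pt) : lie ξ2 ξ3 q = 0 := by simp [lie, fderiv_xi2, fderiv_xi3]

lemma lie_self' (X : VF) (q : Pt) : lie X X q = 0 := by simp [lie]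

lemma lie_swap (X Y : VF) (q : Pt) : lie X Y q = -(lie Y X q) := by simp [lie]

lemma DZxi1 (f : Pt → ℝ) (Z : VF) (q : Pt) :
    fderiv ℝ Z q (ξ1 f q) = (2:ℝ) • fderiv ℝ Z q (1,0,0) + (2*q.2.2) • fderiv ℝ Z q (0,1,0)
      + (2*f q) • fderiv ℝ Z q (0,0,1) := by
  rw [lin_evalP]; simp [ξ1]

lemma DZxi2 (Z : VF) (q : Pt) : fderiv ℝ Z q (ξ2 q) = (2:ℝ) • fderiv ℝ Z q (0,1,0) := by
  rw [lin_evalP]; simp [ξ2]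

lemma DZxi3 (Z : VF) (q : Pt) : fderiv ℝ Z q (ξ3 q) = (2:ℝ) • fderiv ℝ Z q (0,0,1) := by
  rw [lin_evalP]; simp [ξ3]

lemma Dfxi1 (f : Pt → ℝ) (q : Pt) :
    fderiv ℝ f q (ξ1 f q) = 2 * fderiv ℝ f q (1,0,0) + 2*q.2.2 * fderiv ℝ f q (0,1,0)
      + 2*f q * fderiv ℝ f q (0,0,1) := by
  rw [lin_eval]; simp [ξ1] <;> ring

lemma Dfxi2 (f : Pt → ℝ) (q : Pt) : fderiv ℝ f q (ξ2 q) = 2 * fderiv ℝ f q (0,1,0) := by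
  rw [lin_eval]; simp [ξ2]

lemma Dfxi3 (f : Pt → ℝ) (q : Pt) : fderiv ℝ f q (ξ3 q) = 2 * fderiv ℝ f q (0,0,1) := by
  rw [lin_eval]; simp [ξ3]
/-- the action of the Levi-Civita connection of g on the orthonormal frame
(ξ₁, ξ₂, ξ₃). -/
theorem levi_civita_on_frame (f : Pt → ℝ) (hf : ContDiff ℝ (⊤ : ℕ∞) f) :
    IsLC f (ξ1 f) (ξ1 f) (fun _ => (0 : Pt)) ∧
    IsLC f (ξ1 f) ξ2 (fun q => (-(pdy f q - 1)) • ξ3 q) ∧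
    IsLC f (ξ1 f) ξ3 (fun q => (pdy f q - 1) • ξ2 q) ∧
    IsLC f ξ2 (ξ1 f) (fun q => (pdy f q + 1) • ξ3 q) ∧
    IsLC f ξ2 ξ2 (fun _ => (0 : Pt)) ∧
    IsLC f ξ2 ξ3 (fun q => (-(pdy f q + 1)) • ξ1 f q) ∧
    IsLC f ξ3 (ξ1 f) (fun q => (pdy f q + 1) • ξ2 q + (2 * pdp f q) • ξ3 q) ∧
    IsLC f ξ3 ξ2 (fun q => (-(pdy f q + 1)) • ξ1 f q) ∧
    IsLC f ξ3 ξ3 (fun q => (-(2 * pdp f q)) • ξ1 f q) := by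
  refine ⟨?_, ?_, ?_, ?_, ?_, ?_, ?_, ?_, ?_⟩ <;> intro Z hZ q
  · simp only [koszul, vderiv]
    rw [dG1 f Z hZ q (ξ1 f q), gmet_11 f]
    simp only [gMet]
    rw [lie_self' (ξ1 f) q, lie_1Z f hf Z q]
    simp only [DZxi1 f Z q, lin_eval (fderiv ℝ f q) (Z q)]
    simp [gVal, dot, η1, η2, η3, ξ1, ξ2, ξ3, pdy, pdp, fderiv_const]
    ring
  · simp only [koszul, vderiv]
    rw [dG2 f Z hZ q (ξ1 f q), dG1 f Z hZ q (ξ2 q), gmet_12 f]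
    simp only [gMet]
    rw [lie_12 f hf q, lie_1Z f hf Z q, lie_2Z Z q]
    simp only [DZxi1 f Z q, DZxi2 Z q, lin_eval (fderiv ℝ f q) (Z q)]
    simp [gVal, dot, η1, η2, η3, ξ1, ξ2, ξ3, pdy, pdp, fderiv_const]
    ring
  · simp only [koszul, vderiv]
    rw [dG3 f hf Z hZ q (ξ1 f q), dG1 f Z hZ q (ξ3 q), gmet_13 f]
    simp only [gMet]
    rw [lie_13 f hf q, lie_1Z f hf Z q, lie_3Z Z q]
    simp only [DZxi1 f Z q, DZxi3 Z q, Dfxi1 f q, lin_eval (fderiv ℝ f q) (Z q)]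
    simp [gVal, dot, η1, η2, η3, ξ1, ξ2, ξ3, pdy, pdp, fderiv_const]
    ring
  · simp only [koszul, vderiv]
    rw [dG1 f Z hZ q (ξ2 q), dG2 f Z hZ q (ξ1 f q), gmet_21 f]
    simp only [gMet]
    rw [lie_swap ξ2 (ξ1 f) q, lie_12 f hf q, lie_2Z Z q, lie_1Z f hf Z q]
    simp only [DZxi1 f Z q, DZxi2 Z q, lin_eval (fderiv ℝ f q) (Z q)]
    simp [gVal, dot, η1, η2, η3, ξ1, ξ2, ξ3, pdy, pdp, fderiv_const]
    ring
  · simp only [koszul, vderiv]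
    rw [dG2 f Z hZ q (ξ2 q), gmet_22 f]
    simp only [gMet]
    rw [lie_self' ξ2 q, lie_2Z Z q]
    simp only [DZxi2 Z q]
    simp [gVal, dot, η1, η2, η3, ξ1, ξ2, ξ3, pdy, pdp, fderiv_const]
    ring
  · simp only [koszul, vderiv]
    rw [dG3 f hf Z hZ q (ξ2 q), dG2 f Z hZ q (ξ3 q), gmet_23 f]
    simp only [gMet]
    rw [lie_23 q, lie_2Z Z q, lie_3Z Z q]
    simp only [DZxi2 Z q, DZxi3 Z q, Dfxi2 f q]
    simp [gVal, dot, η1, η2, η3, ξ1, ξ2, ξ3, pdy, pdp, fderiv_const]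
    ring
  · simp only [koszul, vderiv]
    rw [dG1 f Z hZ q (ξ3 q), dG3 f hf Z hZ q (ξ1 f q), gmet_31 f]
    simp only [gMet]
    rw [lie_swap ξ3 (ξ1 f) q, lie_13 f hf q, lie_3Z Z q, lie_1Z f hf Z q]
    simp only [DZxi1 f Z q, DZxi3 Z q, Dfxi1 f q, lin_eval (fderiv ℝ f q) (Z q)]
    simp [gVal, dot, η1, η2, η3, ξ1, ξ2, ξ3, pdy, pdp, fderiv_const]
    ring
  · simp only [koszul, vderiv]
    rw [dG2 f Z hZ q (ξ3 q), dG3 f hf Z hZ q (ξ2 q), gmet_32 f]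
    simp only [gMet]
    rw [lie_swap ξ3 ξ2 q, lie_23 q, lie_3Z Z q, lie_2Z Z q]
    simp only [DZxi2 Z q, DZxi3 Z q, Dfxi2 f q]
    simp [gVal, dot, η1, η2, η3, ξ1, ξ2, ξ3, pdy, pdp, fderiv_const]
    ring
  · simp only [koszul, vderiv]
    rw [dG3 f hf Z hZ q (ξ3 q), gmet_33 f]
    simp only [gMet]
    rw [lie_self' ξ3 q, lie_3Z Z q]
    simp only [DZxi3 Z q, Dfxi3 f q]
    simp [gVal, dot, η1, η2, η3, ξ1, ξ2, ξ3, pdy, pdp, fderiv_const]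
    ring
end
end

section
/- The Lie derivative of the tensor φ = η³⊗ξ₁ − η¹⊗ξ₃ along ξ₂ is given by L_{ξ₂}φ = −2 f_y (η¹⊗ξ₁ − η³⊗ξ₃); equivalently, for every smooth vector field X, [ξ₂, φ(X)] − φ([ξ₂, X]) = −2 f_y (η¹(X) ξ₁ − η³(X) ξ₃). In particular the tensor h = (1/2) L_{ξ₂}φ equals −f_y (η¹⊗ξ₁ − η³⊗ξ₃). -/
/-!
Concrete model of the geometry of a second order ODE  y'' = f(x, y, y')
on Σ = ℝ³ with coordinates (x, y, p):

* a vector field is given by its components w.r.t. (∂x, ∂y, ∂p);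
* a 1-form by its components w.r.t. (dx, dy, dp);
* a 2-form by its components w.r.t. (dy∧dp, dp∧dx, dx∧dy);
* a 3-form by its coefficient w.r.t. dx∧dy∧dp.
-/

noncomputable section

/-- the Lie derivative of φ along ξ₂ is L_{ξ₂}φ = −2 f_y (η¹⊗ξ₁ − η³⊗ξ₃):
for every smooth vector field X, [ξ₂, φX] − φ[ξ₂, X] = −2 f_y (η¹(X) ξ₁ − η³(X) ξ₃);
in particular h = (1/2) L_{ξ₂}φ = −f_y (η¹⊗ξ₁ − η³⊗ξ₃). -/
theorem lie_derivative_phi (f : Pt → ℝ) (hf : ContDiff ℝ (⊤ : ℕ∞) f) :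
    (∀ X : VF, SmoothVF X → ∀ q,
      lie ξ2 (phi f X) q - phi f (lie ξ2 X) q
        = (-2 * pdy f q) • (dot (η1 q) (X q) • ξ1 f q - dot (η3 f q) (X q) • ξ3 q)) ∧
    (∀ X : VF, SmoothVF X → ∀ q,
      (1 / 2 : ℝ) • (lie ξ2 (phi f X) q - phi f (lie ξ2 X) q)
        = (-(pdy f q)) • (dot (η1 q) (X q) • ξ1 f q - dot (η3 f q) (X q) • ξ3 q)) := by
  have key : ∀ X : VF, SmoothVF X → ∀ q,
      lie ξ2 (phi f X) q - phi f (lie ξ2 X) q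
        = (-2 * pdy f q) • (dot (η1 q) (X q) • ξ1 f q - dot (η3 f q) (X q) • ξ3 q) := by
    intro X hX q
    have hX' : ContDiff ℝ (⊤ : ℕ∞) X := hX
    have hfd : HasFDerivAt f (fderiv ℝ f q) q :=
      (hf.differentiable (by simp) q).hasFDerivAt
    have hXd : HasFDerivAt X (fderiv ℝ X q) q :=
      (hX'.differentiable (by simp) q).hasFDerivAt
    have hX1 := hXd.fst
    have hX3 := hXd.snd.snd
    have hp : HasFDerivAt (fun r : Pt => r.2.2)
        ((ContinuousLinearMap.snd ℝ ℝ ℝ).comp (ContinuousLinearMap.snd ℝ ℝ (ℝ × ℝ))) q :=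
      (hasFDerivAt_id (𝕜 := ℝ) (x := q)).snd.snd
    have hg := hX3.sub (hfd.mul' hX1)
    have hY : HasFDerivAt (fun r : Pt => ((X r).2.2 - f r * (X r).1, ((X r).2.2 - f r * (X r).1) * r.2.2,
        ((X r).2.2 - f r * (X r).1) * f r - (X r).1)) _ q := HasFDerivAt.prodMk hg (HasFDerivAt.prodMk (HasFDerivAt.mul' hg hp) (HasFDerivAt.sub (HasFDerivAt.mul' hg hfd) hX1))
    have hphi : phi f X = fun r =>
        (((X r).2.2 - f r * (X r).1),
         (((X r).2.2 - f r * (X r).1) * r.2.2,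
          ((X r).2.2 - f r * (X r).1) * f r - (X r).1)) := by
      funext r
      simp only [phi, phiAt, ξ1, ξ3, η1, η3, dot, Prod.smul_mk, smul_eq_mul,
        Prod.mk_sub_mk, Prod.mk.injEq]
      refine ⟨by ring, by ring, by ring⟩
    rw [hphi] at *
    have hfd2 : fderiv ℝ f q ((0:ℝ), (2:ℝ), (0:ℝ)) = 2 * pdy f q := by
      have : ((0:ℝ), (2:ℝ), (0:ℝ)) = (2:ℝ) • (((0:ℝ), (1:ℝ), (0:ℝ)) : Pt) := by
        simp [Prod.smul_mk]
      rw [this, map_smul, pdy]; simp [smul_eq_mul]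
    have hxconst : fderiv ℝ ξ2 q = 0 := fderiv_const_apply _
    have hlie : lie ξ2 X q = fderiv ℝ X q ((0:ℝ), (2:ℝ), (0:ℝ)) := by
      simp [lie, ξ2, hxconst]
    have e1 := hY.fderiv
    simp only [lie, hxconst, ContinuousLinearMap.zero_apply, e1, hXd.fderiv]
    simp only [ContinuousLinearMap.prod_apply, ContinuousLinearMap.add_apply,
      ContinuousLinearMap.sub_apply, ContinuousLinearMap.smul_apply,
      ContinuousLinearMap.comp_apply, ContinuousLinearMap.coe_fst',
      ContinuousLinearMap.coe_snd', ContinuousLinearMap.coe_id', id_eq,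
      ContinuousLinearMap.smulRight_apply, smul_eq_mul, ξ2, hfd2, phi, phiAt, ξ1, ξ3, η1, η3, dot, Prod.smul_mk,
      Prod.mk_sub_mk, Prod.mk.injEq, sub_zero, ContinuousLinearMap.zero_apply, hlie,
      MulOpposite.smul_eq_mul_unop, MulOpposite.unop_op, Pi.sub_apply, Pi.mul_apply]
    set u := fderiv ℝ X q ((0:ℝ), (2:ℝ), (0:ℝ)) with hu
    refine ⟨by ring, by ring, by ring⟩
  refine ⟨key, fun X hX q => ?_⟩
  rw [key X hX q, smul_smul]
  congr 1
  ring
end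
end

section
/- If f does not depend on y (f_y ≡ 0, i.e. the ODE is y'' = f(x, y')), then the contact metric structure (φ, ξ₂, η², g) is Sasakian: the Levi-Civita connection ∇ of g satisfies (∇_X φ)Y = g(X,Y) ξ₂ − η²(Y) X, i.e. ∇_X(φY) − φ(∇_X Y) = g(X,Y) ξ₂ − η²(Y) X, for all smooth vector fields X, Y on Σ. -/
/-!
Concrete model of the geometry of a second order ODE  y'' = f(x, y, y')
on Σ = ℝ³ with coordinates (x, y, p):

* a vector field is given by its components w.r.t. (∂x, ∂y, ∂p);
* a 1-form by its components w.r.t. (dx, dy, dp);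
* a 2-form by its components w.r.t. (dy∧dp, dp∧dx, dx∧dy);
* a 3-form by its coefficient w.r.t. dx∧dy∧dp.
-/

noncomputable section

def Jx (X : VF) (q : Pt) : Pt := fderiv ℝ X q (1, 0, 0)
def Jy (X : VF) (q : Pt) : Pt := fderiv ℝ X q (0, 1, 0)
def Jz (X : VF) (q : Pt) : Pt := fderiv ℝ X q (0, 0, 1)

lemma fd_c1 {X : VF} {q : Pt} (hX : DifferentiableAt ℝ X q) :
    fderiv ℝ (fun r => (X r).1) q = (ContinuousLinearMap.fst ℝ ℝ (ℝ×ℝ)).comp (fderiv ℝ X q) :=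
  (hX.hasFDerivAt.fst).fderiv
lemma fd_c2 {X : VF} {q : Pt} (hX : DifferentiableAt ℝ X q) :
    fderiv ℝ (fun r => (X r).2.1) q = (ContinuousLinearMap.fst ℝ ℝ ℝ).comp
      ((ContinuousLinearMap.snd ℝ ℝ (ℝ×ℝ)).comp (fderiv ℝ X q)) :=
  (hX.hasFDerivAt.snd.fst).fderiv
lemma fd_c3 {X : VF} {q : Pt} (hX : DifferentiableAt ℝ X q) :
    fderiv ℝ (fun r => (X r).2.2) q = (ContinuousLinearMap.snd ℝ ℝ ℝ).comp
      ((ContinuousLinearMap.snd ℝ ℝ (ℝ×ℝ)).comp (fderiv ℝ X q)) :=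
  (hX.hasFDerivAt.snd.snd).fderiv
lemma fd_x1 (q : Pt) : fderiv ℝ (fun r : Pt => r.1) q = ContinuousLinearMap.fst ℝ ℝ (ℝ×ℝ) :=
  hasFDerivAt_fst.fderiv
lemma fd_x2 (q : Pt) : fderiv ℝ (fun r : Pt => r.2.1) q
    = (ContinuousLinearMap.fst ℝ ℝ ℝ).comp (ContinuousLinearMap.snd ℝ ℝ (ℝ×ℝ)) :=
  (hasFDerivAt_fst.comp q hasFDerivAt_snd).fderiv
lemma fd_x3 (q : Pt) : fderiv ℝ (fun r : Pt => r.2.2) q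
    = (ContinuousLinearMap.snd ℝ ℝ ℝ).comp (ContinuousLinearMap.snd ℝ ℝ (ℝ×ℝ)) :=
  (hasFDerivAt_snd.comp q hasFDerivAt_snd).fderiv
lemma fd_prod3 {F1 F2 F3 : Pt → ℝ} {q : Pt} (h1 : DifferentiableAt ℝ F1 q)
    (h2 : DifferentiableAt ℝ F2 q) (h3 : DifferentiableAt ℝ F3 q) :
    fderiv ℝ (fun r : Pt => (F1 r, F2 r, F3 r)) q
      = (fderiv ℝ F1 q).prod ((fderiv ℝ F2 q).prod (fderiv ℝ F3 q)) :=
  (HasFDerivAt.prodMk h1.hasFDerivAt (HasFDerivAt.prodMk h2.hasFDerivAt h3.hasFDerivAt)).fderiv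

lemma vec_decomp (v : Pt) :
    v = v.1 • ((1:ℝ), (0:ℝ), (0:ℝ)) + v.2.1 • ((0:ℝ), (1:ℝ), (0:ℝ)) + v.2.2 • ((0:ℝ), (0:ℝ), (1:ℝ)) := by
  rcases v with ⟨a, b, c⟩
  simp [Prod.ext_iff]

lemma fderiv_dir (F : Pt → ℝ) (q v : Pt) :
    fderiv ℝ F q v = v.1 * pdx F q + v.2.1 * pdy F q + v.2.2 * pdp F q := by
  conv_lhs => rw [vec_decomp v]
  rw [map_add, map_add, map_smul, map_smul, map_smul]
  rfl

lemma fderiv_dirV (X : VF) (q v : Pt) :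
    fderiv ℝ X q v = v.1 • Jx X q + v.2.1 • Jy X q + v.2.2 • Jz X q := by
  conv_lhs => rw [vec_decomp v]
  rw [map_add, map_add, map_smul, map_smul, map_smul]
  rfl

set_option maxHeartbeats 16000000 in
set_option maxRecDepth 100000 in
theorem sasakian_aux (f : Pt → ℝ) (hf : ContDiff ℝ (⊤ : ℕ∞) f)
    (hy : ∀ q, pdy f q = 0) (X Y : Pt → Pt)
    (dX : Differentiable ℝ X) (dY : Differentiable ℝ Y) : ∀ q,
      nabla f X (phi f Y) q - phiAt f q (nabla f X Y q)
        = gVal f q (X q) (Y q) • ξ2 q - dot (η2 q) (Y q) • X q := by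
  intro q
  have df : Differentiable ℝ f := hf.differentiable (by simp)
  have cX1 := fd_c1 (dX q); have cX2 := fd_c2 (dX q); have cX3 := fd_c3 (dX q)
  have cY1 := fd_c1 (dY q); have cY2 := fd_c2 (dY q); have cY3 := fd_c3 (dY q)
  delta nabla koszul vderiv gMet gVal lie phi phiAt η1 η2 η3 ξ1 ξ2 ξ3 dot
  simp only [div_eq_mul_inv, Prod.smul_mk, Prod.mk_add_mk, Prod.mk_sub_mk, smul_eq_mul,
    Prod.fst_sub, Prod.snd_sub, Prod.fst_add, Prod.snd_add]
  simp (disch := fun_prop) only [fderiv_fun_mul, fderiv_fun_add, fderiv_fun_sub, fderiv_fun_neg, fderiv_fun_const,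
    fd_prod3, cX1, cX2, cX3, cY1, cY2, cY3, fd_x1, fd_x2, fd_x3]
  simp only [ContinuousLinearMap.add_apply, ContinuousLinearMap.smul_apply,
    ContinuousLinearMap.comp_apply, ContinuousLinearMap.neg_apply, ContinuousLinearMap.zero_apply,
    ContinuousLinearMap.prod_apply, ContinuousLinearMap.coe_fst', ContinuousLinearMap.coe_snd',
    ContinuousLinearMap.sub_apply, Pi.zero_apply, smul_eq_mul, one_smul, zero_smul, smul_zero,
    add_zero, zero_add, mul_zero, zero_mul, mul_one, one_mul, neg_zero, sub_zero, zero_sub]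
  simp only [fderiv_dir, fderiv_dirV, hy]
  simp only [mul_zero, zero_mul, add_zero, zero_add, mul_one, one_mul, smul_zero, zero_smul,
    one_smul, neg_zero, sub_zero, zero_sub]
  simp only [Prod.ext_iff, Prod.smul_mk, Prod.mk_add_mk, Prod.mk_sub_mk, smul_eq_mul,
    Prod.fst_add, Prod.snd_add, Prod.fst_sub, Prod.snd_sub, Prod.smul_fst, Prod.smul_snd]
  refine ⟨?_, ?_, ?_⟩ <;> ring

/-- if f does not depend on y (the ODE is y'' = f(x,y')), the contact
metric structure (φ, ξ₂, η², g) is Sasakian: the Levi-Civita connection ∇ of g satisfies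
(∇_X φ)Y = ∇_X(φY) − φ(∇_X Y) = g(X,Y) ξ₂ − η²(Y) X for all smooth vector fields X, Y. -/
theorem sasakian_structure (f : Pt → ℝ) (hf : ContDiff ℝ (⊤ : ℕ∞) f)
    (hy : ∀ q, pdy f q = 0) :
    ∀ X Y : VF, SmoothVF X → SmoothVF Y → ∀ q,
      nabla f X (phi f Y) q - phiAt f q (nabla f X Y q)
        = gVal f q (X q) (Y q) • ξ2 q - dot (η2 q) (Y q) • X q := by
  intro X Y hX hY q
  exact sasakian_aux f hf hy X Y
    ((hX : ContDiff ℝ (⊤:ℕ∞) X).differentiable (by simp))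
    ((hY : ContDiff ℝ (⊤:ℕ∞) Y).differentiable (by simp)) q
end
end

section
/- The 1-form η³ satisfies η³ ∧ dη³ = 2 f_y vol_g. Consequently η³ satisfies the Jacobi identity η³ ∧ dη³ = 0 (i.e. η³ is a Poisson 1-form, equivalently the bi-vector Ω = ξ₁∧ξ₂ with ι_Ω vol_g = η³ is a Poisson structure) if and only if f_y vanishes identically on Σ. -/
/-!
Concrete model of the geometry of a second order ODE  y'' = f(x, y, y')
on Σ = ℝ³ with coordinates (x, y, p):

* a vector field is given by its components w.r.t. (∂x, ∂y, ∂p);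
* a 1-form by its components w.r.t. (dx, dy, dp);
* a 2-form by its components w.r.t. (dy∧dp, dp∧dx, dx∧dy);
* a 3-form by its coefficient w.r.t. dx∧dy∧dp.
-/

noncomputable section

/-- η³ ∧ dη³ = 2 f_y vol_g; moreover the bi-vector Ω = ξ₁∧ξ₂ satisfies
ι_Ω vol_g = η³, and η³ is a Poisson 1-form (η³ ∧ dη³ = 0, equivalently Ω is a Poisson
structure) iff f_y vanishes identically on Σ. -/
theorem jacobi_identity_eta3 (f : Pt → ℝ) (hf : ContDiff ℝ (⊤ : ℕ∞) f) :
    (∀ q, w12 (η3 f) (d1 (η3 f)) q = 2 * pdy f q * volg f q) ∧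
    (∀ q, volg f q • cross (ξ1 f q) (ξ2 q) = η3 f q) ∧
    ((∀ q, w12 (η3 f) (d1 (η3 f)) q = 0) ↔ (∀ q, pdy f q = 0)) := by

  have hdf : Differentiable ℝ f := hf.differentiable (by simp)
  have key : ∀ q v, fderiv ℝ (fun r => -f r / 2) q v = -(fderiv ℝ f q v) / 2 := by
    intro q v
    have h : (fun r => -f r / 2) = fun r => (-(1/2) : ℝ) * f r := by funext r; ring
    rw [h, fderiv_const_mul (hdf q)]
    simp; ring
  have hvol : ∀ q : Pt, volg f q = 1/8 := by
    intro q
    simp [volg, w12, w11, η1, η2, η3, dot, cross]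
    ring
  have hwedge : ∀ q, w12 (η3 f) (d1 (η3 f)) q = pdy f q / 4 := by
    intro q
    have h1 : (fun r => (η3 f r).1) = fun r => -f r / 2 := rfl
    have h2 : (fun r => (η3 f r).2.1) = fun _ => (0:ℝ) := rfl
    have h3 : (fun r => (η3 f r).2.2) = fun _ => (1/2:ℝ) := rfl
    simp only [w12, d1, h1, h2, h3, pdx, pdy, pdp, key, fderiv_const,
      Pi.zero_apply, ContinuousLinearMap.zero_apply]
    simp [η3, dot]
    ring
  refine ⟨?_, ?_, ?_⟩
  · intro q
    rw [hwedge q, hvol q]; ring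
  · intro q
    rw [hvol q]
    simp [ξ1, ξ2, η3, cross, Prod.ext_iff]
    constructor
    · ring
    · norm_num
  · constructor
    · intro h q
      have := h q
      rw [hwedge q] at this
      linarith
    · intro h q
      rw [hwedge q, h q]
      norm_num
end
end

section
/- The following are equivalent: (i) η³ ∧ dη³ = 0 everywhere on Σ (the bi-vector Ω = ξ₁∧ξ₂ defines a Poisson structure); (ii) the Lie derivative L_{ξ₂} g = 0, i.e. ξ₂ is Killing, so that the contact metric structure (φ, ξ₂, η², g) is Sasakian; (iii) f_y ≡ 0 on Σ. -/
/-!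
Concrete model of the geometry of a second order ODE  y'' = f(x, y, y')
on Σ = ℝ³ with coordinates (x, y, p):

* a vector field is given by its components w.r.t. (∂x, ∂y, ∂p);
* a 1-form by its components w.r.t. (dx, dy, dp);
* a 2-form by its components w.r.t. (dy∧dp, dp∧dx, dx∧dy);
* a 3-form by its coefficient w.r.t. dx∧dy∧dp.
-/

noncomputable section

lemma dir2_eq : (((0:ℝ), (2:ℝ), (0:ℝ)) : Pt) = (2:ℝ) • (((0:ℝ), (1:ℝ), (0:ℝ)) : Pt) := by
  norm_num [Prod.ext_iff]

lemma fderiv_dir2 (F : Pt → ℝ) (q : Pt) :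
    fderiv ℝ F q ((0:ℝ),(2:ℝ),(0:ℝ)) = 2 * pdy F q := by
  rw [dir2_eq, map_smul]; simp [pdy, smul_eq_mul]

lemma gmet_dir (f : Pt → ℝ) (hf : ContDiff ℝ (⊤:ℕ∞) f) (hfy : ∀ q, pdy f q = 0)
    (X Y : VF) (hX : SmoothVF X) (hY : SmoothVF Y) (q : Pt) :
    fderiv ℝ (gMet f X Y) q ((0:ℝ),(2:ℝ),(0:ℝ))
      = gVal f q (fderiv ℝ X q ((0:ℝ),(2:ℝ),(0:ℝ))) (Y q)
        + gVal f q (X q) (fderiv ℝ Y q ((0:ℝ),(2:ℝ),(0:ℝ))) := by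
  have hx := ((hX.differentiable (by simp)) q).hasFDerivAt
  have hy := ((hY.differentiable (by simp)) q).hasFDerivAt
  have hfd := ((hf.differentiable (by simp)) q).hasFDerivAt
  have hp : HasFDerivAt (fun r : Pt => r.2.2)
      ((ContinuousLinearMap.snd ℝ ℝ ℝ).comp (ContinuousLinearMap.snd ℝ ℝ (ℝ × ℝ))) q :=
    ((hasFDerivAt_id (𝕜 := ℝ) q).snd).snd
  have hAx := ((hx.fst.const_mul ((1:ℝ)/2)).add (hx.snd.fst.const_mul (0:ℝ))).add
    (hx.snd.snd.const_mul (0:ℝ))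
  have hAy := ((hy.fst.const_mul ((1:ℝ)/2)).add (hy.snd.fst.const_mul (0:ℝ))).add
    (hy.snd.snd.const_mul (0:ℝ))
  have hBx := (((hp.neg.mul_const ((2:ℝ)⁻¹)).mul hx.fst).add
    (hx.snd.fst.const_mul ((1:ℝ)/2))).add (hx.snd.snd.const_mul (0:ℝ))
  have hBy := (((hp.neg.mul_const ((2:ℝ)⁻¹)).mul hy.fst).add
    (hy.snd.fst.const_mul ((1:ℝ)/2))).add (hy.snd.snd.const_mul (0:ℝ))
  have hCx := (((hfd.neg.mul_const ((2:ℝ)⁻¹)).mul hx.fst).add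
    (hx.snd.fst.const_mul (0:ℝ))).add (hx.snd.snd.const_mul ((1:ℝ)/2))
  have hCy := (((hfd.neg.mul_const ((2:ℝ)⁻¹)).mul hy.fst).add
    (hy.snd.fst.const_mul (0:ℝ))).add (hy.snd.snd.const_mul ((1:ℝ)/2))
  have hG := ((hAx.mul hAy).add (hBx.mul hBy)).add (hCx.mul hCy)
  have hG2 : HasFDerivAt (gMet f X Y) _ q := hG
  rw [hG2.fderiv]
  have hf0 : fderiv ℝ f q ((0:ℝ),(2:ℝ),(0:ℝ)) = 0 := by
    rw [fderiv_dir2, hfy q, mul_zero]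
  simp only [ContinuousLinearMap.add_apply, ContinuousLinearMap.smul_apply,
    ContinuousLinearMap.comp_apply, ContinuousLinearMap.coe_fst', ContinuousLinearMap.coe_snd',
    ContinuousLinearMap.neg_apply, ContinuousLinearMap.coe_id', smul_eq_mul, hf0,
    gVal, dot, η1, η2, η3, id_eq, Pi.add_apply, Pi.mul_apply, Pi.neg_apply]
  ring_nf

/-- the following are equivalent: (i) η³ ∧ dη³ = 0 on Σ (the bi-vector
Ω = ξ₁∧ξ₂ is a Poisson structure); (ii) L_{ξ₂} g = 0, i.e. ξ₂ is Killing, so the contact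
metric structure (φ, ξ₂, η², g) is Sasakian; (iii) f_y ≡ 0 on Σ. -/
theorem poisson_iff_sasakian (f : Pt → ℝ) (hf : ContDiff ℝ (⊤ : ℕ∞) f) :
    ((∀ q, w12 (η3 f) (d1 (η3 f)) q = 0) ↔ (∀ q, pdy f q = 0)) ∧
    ((∀ X Y : VF, SmoothVF X → SmoothVF Y → ∀ q,
        vderiv ξ2 (gMet f X Y) q - gMet f (lie ξ2 X) Y q - gMet f X (lie ξ2 Y) q = 0)
      ↔ (∀ q, pdy f q = 0)) := by
  have hfd : ∀ q : Pt, HasFDerivAt f (fderiv ℝ f q) q :=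
    fun q => ((hf.differentiable (by simp)) q).hasFDerivAt
  constructor
  · -- part (i) ↔ (iii)
    have hval : ∀ q, w12 (η3 f) (d1 (η3 f)) q = pdy f q / 4 := by
      intro q
      have hD : HasFDerivAt (fun r : Pt => -f r / 2) ((2:ℝ)⁻¹ • (-(fderiv ℝ f q))) q :=
        (hfd q).neg.mul_const ((2:ℝ)⁻¹)
      have hD' := hD.fderiv
      simp only [w12, d1, η3, pdx, pdy, pdp, dot, hD',
        fderiv_const, fderiv_const_apply, ContinuousLinearMap.smul_apply, ContinuousLinearMap.neg_apply,
        ContinuousLinearMap.zero_apply, Pi.zero_apply, smul_eq_mul]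
      ring_nf
    constructor
    · intro H q
      have := H q
      rw [hval q] at this
      linarith
    · intro H q
      rw [hval q, H q]; ring
  · constructor
    · intro H q
      have hx0 : fderiv ℝ (ξ2) q = 0 := fderiv_const_apply _
      have h := H (fun _ => ((1:ℝ),(0:ℝ),(0:ℝ))) (fun _ => ((0:ℝ),(0:ℝ),(1:ℝ)))
        contDiff_const contDiff_const q
      have hXY : gMet f (fun _ => ((1:ℝ),(0:ℝ),(0:ℝ))) (fun _ => ((0:ℝ),(0:ℝ),(1:ℝ)))
          = fun r => f r * (-(1:ℝ)/4) := by
        funext r; simp only [gMet, gVal, dot, η1, η2, η3]; ring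
      rw [hXY] at h
      have hd : fderiv ℝ (fun r => f r * (-(1:ℝ)/4)) q ((0:ℝ),(2:ℝ),(0:ℝ))
          = -(pdy f q)/2 := by
        rw [fderiv_mul_const ((hf.differentiable (by simp)) q) (-(1:ℝ)/4)]
        simp only [ContinuousLinearMap.smul_apply, smul_eq_mul, fderiv_dir2]
        ring
      have hlie1 : gMet f (lie ξ2 (fun _ => ((1:ℝ),(0:ℝ),(0:ℝ))))
          (fun _ => ((0:ℝ),(0:ℝ),(1:ℝ))) q = 0 := by
        simp [gMet, gVal, lie, ξ2, dot, η1, η2, η3, hx0, fderiv_const]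
      have hlie2 : gMet f (fun _ => ((1:ℝ),(0:ℝ),(0:ℝ)))
          (lie ξ2 (fun _ => ((0:ℝ),(0:ℝ),(1:ℝ)))) q = 0 := by
        simp [gMet, gVal, lie, ξ2, dot, η1, η2, η3, hx0, fderiv_const]
      have hv : vderiv ξ2 (fun r => f r * (-(1:ℝ)/4)) q = -(pdy f q)/2 := hd
      rw [hv, hlie1, hlie2] at h
      linarith
    · intro hfy X Y hX hY q
      have hv : vderiv ξ2 (gMet f X Y) q
          = fderiv ℝ (gMet f X Y) q ((0:ℝ),(2:ℝ),(0:ℝ)) := rfl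
      rw [hv, gmet_dir f hf hfy X Y hX hY q]
      have hx0 : fderiv ℝ (ξ2) q = 0 := fderiv_const_apply _
      have hl1 : lie ξ2 X q = fderiv ℝ X q ((0:ℝ),(2:ℝ),(0:ℝ)) := by
        simp [lie, ξ2, hx0]
      have hl2 : lie ξ2 Y q = fderiv ℝ Y q ((0:ℝ),(2:ℝ),(0:ℝ)) := by
        simp [lie, ξ2, hx0]
      simp only [gMet, hl1, hl2]
      ring
end
end

section
/- For any smooth function H : Σ → ℝ, set λ = ξ₁(H) = 2(H_x + pH_y + fH_p), μ = ξ₂(H) = 2H_y, and η = λ η¹ + μ η². Then η = dH − ξ₃(H) η³, and η ∧ dη = ( μ ξ₃(λ) − λ ξ₃(μ) − 2μ² ) vol_g. -/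
/-!
Concrete model of the geometry of a second order ODE  y'' = f(x, y, y')
on Σ = ℝ³ with coordinates (x, y, p):

* a vector field is given by its components w.r.t. (∂x, ∂y, ∂p);
* a 1-form by its components w.r.t. (dx, dy, dp);
* a 2-form by its components w.r.t. (dy∧dp, dp∧dx, dx∧dy);
* a 3-form by its coefficient w.r.t. dx∧dy∧dp.
-/

noncomputable section

lemma fderiv_triple (F : Pt → ℝ) (q : Pt) (a b c : ℝ) :
    fderiv ℝ F q (a, b, c) = a * pdx F q + b * pdy F q + c * pdp F q := by
  have h : ((a, b, c) : Pt) = a • ((1:ℝ), (0:ℝ), (0:ℝ)) + b • ((0:ℝ), (1:ℝ), (0:ℝ)) + c • ((0:ℝ), (0:ℝ), (1:ℝ)) := by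
    simp [Prod.ext_iff]
  rw [h, map_add, map_add, map_smul, map_smul, map_smul]
  simp [pdx, pdy, pdp]

/-- with λ = ξ₁(H) = 2(H_x + pH_y + fH_p), μ = ξ₂(H) = 2H_y and
η = λη¹ + μη², one has η = dH − ξ₃(H) η³ and
η ∧ dη = ( μ ξ₃(λ) − λ ξ₃(μ) − 2μ² ) vol_g. -/
theorem eta_jacobi_expression (f : Pt → ℝ) (hf : ContDiff ℝ (⊤ : ℕ∞) f)
    (H : Pt → ℝ) (hH : ContDiff ℝ (⊤ : ℕ∞) H) :
    (∀ q, vderiv (ξ1 f) H q = 2 * (pdx H q + q.2.2 * pdy H q + f q * pdp H q)) ∧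
    (∀ q, vderiv ξ2 H q = 2 * pdy H q) ∧
    (∀ q, vderiv (ξ1 f) H q • η1 q + vderiv ξ2 H q • η2 q
        = dFun H q - vderiv ξ3 H q • η3 f q) ∧
    (∀ q, w12 (fun r => vderiv (ξ1 f) H r • η1 r + vderiv ξ2 H r • η2 r)
            (d1 (fun r => vderiv (ξ1 f) H r • η1 r + vderiv ξ2 H r • η2 r)) q
        = (vderiv ξ2 H q * vderiv ξ3 (vderiv (ξ1 f) H) q
            - vderiv (ξ1 f) H q * vderiv ξ3 (vderiv ξ2 H) q
            - 2 * (vderiv ξ2 H q) ^ 2) * volg f q) := by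
  refine ⟨fun q => ?_, fun q => ?_, fun q => ?_, fun q => ?_⟩
  · simp only [vderiv, ξ1, fderiv_triple]; ring
  · simp only [vderiv, ξ2, fderiv_triple]; ring
  · simp only [vderiv, ξ1, ξ2, ξ3, fderiv_triple, dFun, η1, η2, η3,
      Prod.smul_mk, smul_eq_mul, Prod.mk_add_mk, Prod.mk_sub_mk, Prod.mk.injEq]
    refine ⟨by ring, by ring, by ring⟩
  · set L : Pt → ℝ := vderiv (ξ1 f) H with hLdef
    set M : Pt → ℝ := vderiv ξ2 H with hMdef
    have hfd : ContDiff ℝ (⊤ : ℕ∞) (fun q : Pt => fderiv ℝ H q) :=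
      hH.fderiv_right (by simp)
    have hM : Differentiable ℝ M := by
      have h : ContDiff ℝ (⊤ : ℕ∞) (fun q : Pt => fderiv ℝ H q ((0:ℝ), (2:ℝ), (0:ℝ))) :=
        hfd.clm_apply contDiff_const
      exact h.differentiable (by simp)
    have hξ1 : ContDiff ℝ (⊤ : ℕ∞) (fun q : Pt => (((2:ℝ), 2 * q.2.2, 2 * f q) : Pt)) :=
      contDiff_const.prodMk ((contDiff_const.mul (contDiff_snd.comp contDiff_snd)).prodMk
        (contDiff_const.mul hf))
    have hL : Differentiable ℝ L := by
      have h : ContDiff ℝ (⊤ : ℕ∞) (fun q : Pt => fderiv ℝ H q (((2:ℝ), 2 * q.2.2, 2 * f q) : Pt)) :=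
        hfd.clm_apply hξ1
      exact h.differentiable (by simp)
    have hsnd : HasFDerivAt (fun r : Pt => r.2.2)
        ((ContinuousLinearMap.snd ℝ ℝ ℝ).comp (ContinuousLinearMap.snd ℝ ℝ (ℝ × ℝ))) q :=
      hasFDerivAt_snd.comp q hasFDerivAt_snd
    have hc1 : (fun r : Pt => (L r • η1 r + M r • η2 r).1)
        = fun r : Pt => L r * (1/2) + (M r * r.2.2) * (-(1/2)) := by
      funext r; simp [η1, η2]; ring
    have hc2 : (fun r : Pt => (L r • η1 r + M r • η2 r).2.1)
        = fun r : Pt => M r * (1/2) := by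
      funext r; simp [η1, η2]
    have hc3 : (fun r : Pt => (L r • η1 r + M r • η2 r).2.2)
        = fun _ : Pt => (0:ℝ) := by
      funext r; simp [η1, η2]
    have hpd1 : pdp (fun r : Pt => L r * (1/2) + (M r * r.2.2) * (-(1/2))) q
        = pdp L q * (1/2) + (M q + q.2.2 * pdp M q) * (-(1/2)) := by
      have hd1 : DifferentiableAt ℝ (fun r : Pt => L r * (1/2)) q := (hL q).mul_const _
      have hd2 : DifferentiableAt ℝ (fun r : Pt => (M r * r.2.2) * (-(1/2))) q :=
        ((hM q).mul hsnd.differentiableAt).mul_const _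
      rw [pdp, fderiv_fun_add hd1 hd2, fderiv_mul_const (hL q),
        fderiv_mul_const (c := fun r : Pt => M r * r.2.2) ((hM q).mul hsnd.differentiableAt),
        fderiv_fun_mul (hM q) hsnd.differentiableAt, hsnd.fderiv]
      simp [pdp]
      ring
    have hpd2 : pdp (fun r : Pt => M r * (1/2)) q = pdp M q * (1/2) := by
      rw [pdp, fderiv_mul_const (hM q)]
      simp [pdp]
      ring
    have hv3L : vderiv ξ3 L q = 2 * pdp L q := by
      simp only [vderiv, ξ3, fderiv_triple]; ring
    have hv3M : vderiv ξ3 M q = 2 * pdp M q := by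
      simp only [vderiv, ξ3, fderiv_triple]; ring
    simp only [w12, d1, hc1, hc2, hc3]
    rw [hpd1, hpd2, show pdy (fun _ : Pt => (0:ℝ)) q = 0 from by simp [pdy],
      show pdx (fun _ : Pt => (0:ℝ)) q = 0 from by simp [pdx]]
    simp only [hv3L, hv3M, volg, w11, w12, dot, cross, η1, η2, η3, Prod.smul_mk,
      smul_eq_mul, Prod.mk_add_mk]
    ring
end
end

section
/- Assume f_y ≡ 0 (the ODE is y'' = f(x, y')). Then the Hamiltonian vector field v = 2(f_x + f f_p) ξ₂ (the field obtained by taking the right-hand side f as Hamiltonian function) satisfies ∇_v v = 0, where ∇ is the Levi-Civita connection of g; equivalently, for every smooth vector field Z on Σ, 2 v(g(v,Z)) − Z(g(v,v)) − 2 g([v,Z], v) = 0. Hence the integral curves of v are geodesics of g. -/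
/-!
Concrete model of the geometry of a second order ODE  y'' = f(x, y, y')
on Σ = ℝ³ with coordinates (x, y, p):

* a vector field is given by its components w.r.t. (∂x, ∂y, ∂p);
* a 1-form by its components w.r.t. (dx, dy, dp);
* a 2-form by its components w.r.t. (dy∧dp, dp∧dx, dx∧dy);
* a 3-form by its coefficient w.r.t. dx∧dy∧dp.
-/

noncomputable section

/-- Auxiliary: the fderiv of a smooth function, applied to a fixed vector, is smooth. -/
private lemma aux_contDiff_pd {f : Pt → ℝ} (hf : ContDiff ℝ (⊤ : ℕ∞) f) (w : Pt) :
    ContDiff ℝ (⊤ : ℕ∞) (fun q => fderiv ℝ f q w) :=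
  (hf.fderiv_right (m := (⊤ : ℕ∞)) (by exact_mod_cast le_top)).clm_apply contDiff_const

private lemma aux_mixed_eq {f : Pt → ℝ} (hf : ContDiff ℝ (⊤ : ℕ∞) f) (q w u : Pt) :
    fderiv ℝ (fun r => fderiv ℝ f r w) q u = fderiv ℝ (fderiv ℝ f) q u w := by
  rw [fderiv_clm_apply
    ((hf.fderiv_right (m := (⊤ : ℕ∞)) (by exact_mod_cast le_top)).differentiable
      (by simp) q) (differentiableAt_const w)]
  simp

private lemma aux_symm2 {f : Pt → ℝ} (hf : ContDiff ℝ (⊤ : ℕ∞) f) (q v w : Pt) :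
    fderiv ℝ (fderiv ℝ f) q v w = fderiv ℝ (fderiv ℝ f) q w v :=
  (hf.contDiffAt.isSymmSndFDerivAt (by rw [minSmoothness_of_isRCLikeNormedField]; exact WithTop.coe_le_coe.mpr le_top)) v w

/-- Auxiliary: mixed partials with y vanish if f_y ≡ 0. -/
private lemma aux_mixed_y {f : Pt → ℝ} (hf : ContDiff ℝ (⊤ : ℕ∞) f)
    (hy : ∀ q, pdy f q = 0) (q w : Pt) (c : ℝ) :
    fderiv ℝ (fun r => fderiv ℝ f r w) q ((0 : ℝ), c, (0 : ℝ)) = 0 := by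
  have h1 : (((0 : ℝ), c, (0 : ℝ)) : Pt) = c • (((0 : ℝ), (1 : ℝ), (0 : ℝ)) : Pt) := by simp
  rw [h1, map_smul, smul_eq_mul]
  have h2 : fderiv ℝ (fun r => fderiv ℝ f r w) q ((0 : ℝ), (1 : ℝ), (0 : ℝ)) = 0 := by
    rw [aux_mixed_eq hf, aux_symm2 hf, ← aux_mixed_eq hf]
    have h3 : (fun r => fderiv ℝ f r ((0 : ℝ), (1 : ℝ), (0 : ℝ))) = fun _ : Pt => (0 : ℝ) :=
      funext fun r => hy r
    rw [h3, fderiv_fun_const]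
    simp
  rw [h2, mul_zero]

/-- Auxiliary: f itself has vanishing y-derivative in any scaled y-direction. -/
private lemma aux_f_y {f : Pt → ℝ} (hf : ContDiff ℝ (⊤ : ℕ∞) f)
    (hy : ∀ q, pdy f q = 0) (q : Pt) (c : ℝ) :
    fderiv ℝ f q ((0 : ℝ), c, (0 : ℝ)) = 0 := by
  have h1 : (((0 : ℝ), c, (0 : ℝ)) : Pt) = c • (((0 : ℝ), (1 : ℝ), (0 : ℝ)) : Pt) := by simp
  rw [h1, map_smul, smul_eq_mul]
  have h2 : fderiv ℝ f q ((0 : ℝ), (1 : ℝ), (0 : ℝ)) = 0 := hy q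
  rw [h2, mul_zero]

/-- Auxiliary: the Hamiltonian coefficient h = 2(f_x + f f_p) is differentiable. -/
private lemma aux_h_diff {f : Pt → ℝ} (hf : ContDiff ℝ (⊤ : ℕ∞) f) (q : Pt) :
    DifferentiableAt ℝ (fun r => 2 * (pdx f r + f r * pdp f r)) q := by
  have dx : DifferentiableAt ℝ (fun r => fderiv ℝ f r ((1 : ℝ), (0 : ℝ), (0 : ℝ))) q :=
    (aux_contDiff_pd hf _).differentiable (by simp) q
  have dp : DifferentiableAt ℝ (fun r => fderiv ℝ f r ((0 : ℝ), (0 : ℝ), (1 : ℝ))) q :=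
    (aux_contDiff_pd hf _).differentiable (by simp) q
  have df : DifferentiableAt ℝ f q := (hf.differentiable (by simp)) q
  exact ((dx.add (df.mul dp)).const_mul 2)

/-- Auxiliary: h = 2(f_x + f f_p) has vanishing y-derivative. -/
private lemma aux_h_y {f : Pt → ℝ} (hf : ContDiff ℝ (⊤ : ℕ∞) f)
    (hy : ∀ q, pdy f q = 0) (q : Pt) (c : ℝ) :
    fderiv ℝ (fun r => 2 * (pdx f r + f r * pdp f r)) q ((0 : ℝ), c, (0 : ℝ)) = 0 := by
  have df : HasFDerivAt f (fderiv ℝ f q) q :=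
    ((hf.differentiable (by simp)) q).hasFDerivAt
  have dx : HasFDerivAt (fun r => fderiv ℝ f r ((1 : ℝ), (0 : ℝ), (0 : ℝ)))
      (fderiv ℝ (fun r => fderiv ℝ f r ((1 : ℝ), (0 : ℝ), (0 : ℝ))) q) q :=
    ((aux_contDiff_pd hf _).differentiable (by simp) q).hasFDerivAt
  have dp : HasFDerivAt (fun r => fderiv ℝ f r ((0 : ℝ), (0 : ℝ), (1 : ℝ)))
      (fderiv ℝ (fun r => fderiv ℝ f r ((0 : ℝ), (0 : ℝ), (1 : ℝ))) q) q :=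
    ((aux_contDiff_pd hf _).differentiable (by simp) q).hasFDerivAt
  have H : HasFDerivAt (fun r => 2 * ((fun r => fderiv ℝ f r ((1 : ℝ), (0 : ℝ), (0 : ℝ))) r
          + f r * (fun r => fderiv ℝ f r ((0 : ℝ), (0 : ℝ), (1 : ℝ))) r)) _ q :=
    ((dx.add (df.mul dp)).const_mul (2 : ℝ))
  have hfun : (fun r => 2 * (pdx f r + f r * pdp f r))
      = fun r => 2 * ((fun r => fderiv ℝ f r ((1 : ℝ), (0 : ℝ), (0 : ℝ))) r
          + f r * (fun r => fderiv ℝ f r ((0 : ℝ), (0 : ℝ), (1 : ℝ))) r) := rfl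
  rw [hfun, H.fderiv]
  simp only [ContinuousLinearMap.smul_apply, ContinuousLinearMap.add_apply, smul_eq_mul,
    aux_mixed_y hf hy, aux_f_y hf hy]
  ring

/-- The core computation: for any scalar function h that is differentiable at q and whose
derivative annihilates the y-direction vector (0, 2 h q, 0), the vector field h·ξ₂
satisfies the geodesic identity against any vector field Z differentiable at q. -/
private lemma key_gen (f h : Pt → ℝ) (q : Pt) (hdh : DifferentiableAt ℝ h q)
    (hdy : fderiv ℝ h q ((0:ℝ), h q * 2, (0:ℝ)) = 0)
    (Z : VF) (hZq : DifferentiableAt ℝ Z q) :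
    2 * vderiv (fun r => h r • ξ2 r) (gMet f (fun r => h r • ξ2 r) Z) q
      - vderiv Z (gMet f (fun r => h r • ξ2 r) (fun r => h r • ξ2 r)) q
      - 2 * gMet f (lie (fun r => h r • ξ2 r) Z) (fun r => h r • ξ2 r) q = 0 := by
  have hG1 : gMet f (fun r => h r • ξ2 r) Z
      = fun r => h r * ((-1/2 * r.2.2) * (Z r).1 + 1/2 * (Z r).2.1) := by
    funext r
    simp [gMet, gVal, dot, η1, η2, η3, ξ2, Prod.smul_mk, smul_eq_mul]
    ring
  have hG2 : gMet f (fun r => h r • ξ2 r) (fun r => h r • ξ2 r)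
      = fun r => h r * h r := by
    funext r
    simp [gMet, gVal, dot, η1, η2, η3, ξ2, Prod.smul_mk, smul_eq_mul]
    ring
  have hG3 : ∀ W : VF, gMet f W (fun r => h r • ξ2 r) q
      = h q * ((-1/2 * q.2.2) * (W q).1 + 1/2 * (W q).2.1) := by
    intro W
    simp [gMet, gVal, dot, η1, η2, η3, ξ2, Prod.smul_mk, smul_eq_mul]
    ring
  have hZ : HasFDerivAt Z (fderiv ℝ Z q) q := hZq.hasFDerivAt
  have hh : HasFDerivAt h (fderiv ℝ h q) q := hdh.hasFDerivAt
  set Z' := fderiv ℝ Z q with hZ'def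
  set H' := fderiv ℝ h q with hH'def
  have hvq : h q • ξ2 q = ((0:ℝ), h q * 2, (0:ℝ)) := by
    simp [ξ2, Prod.smul_mk, smul_eq_mul]
  have hz1 : HasFDerivAt (fun r => (Z r).1)
      ((ContinuousLinearMap.fst ℝ ℝ (ℝ × ℝ)).comp Z') q :=
    ((ContinuousLinearMap.fst ℝ ℝ (ℝ × ℝ)).hasFDerivAt).comp q hZ
  have hz2 : HasFDerivAt (fun r => (Z r).2.1)
      (((ContinuousLinearMap.fst ℝ ℝ ℝ).comp (ContinuousLinearMap.snd ℝ ℝ (ℝ × ℝ))).comp Z') q :=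
    (((ContinuousLinearMap.fst ℝ ℝ ℝ).comp
      (ContinuousLinearMap.snd ℝ ℝ (ℝ × ℝ))).hasFDerivAt).comp q hZ
  have hp3 : HasFDerivAt (fun r : Pt => r.2.2)
      ((ContinuousLinearMap.snd ℝ ℝ ℝ).comp (ContinuousLinearMap.snd ℝ ℝ (ℝ × ℝ))) q :=
    ((ContinuousLinearMap.snd ℝ ℝ ℝ).comp (ContinuousLinearMap.snd ℝ ℝ (ℝ × ℝ))).hasFDerivAt
  have hφ := ((hp3.const_mul ((-1:ℝ)/2)).mul hz1).add (hz2.const_mul ((1:ℝ)/2))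
  have hT1 : HasFDerivAt (fun r => h r * (-1 / 2 * r.2.2 * (Z r).1 + 1 / 2 * (Z r).2.1)) _ q :=
    hh.mul hφ
  have hT2 : HasFDerivAt (fun r => h r * h r) _ q := hh.mul hh
  have hVder : HasFDerivAt (fun r => h r • ξ2 r)
      (H'.smulRight (((0:ℝ),(2:ℝ),(0:ℝ)) : Pt)) q := hh.smul_const _
  rw [hG3]
  simp only [vderiv, lie]
  rw [hG1, hG2, hvq, hT1.fderiv, hT2.fderiv, hVder.fderiv]
  simp only [ContinuousLinearMap.add_apply, ContinuousLinearMap.smul_apply,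
    ContinuousLinearMap.comp_apply, ContinuousLinearMap.smulRight_apply,
    ContinuousLinearMap.coe_fst', ContinuousLinearMap.coe_snd',
    smul_eq_mul, Prod.smul_mk, Prod.fst_sub, Prod.snd_sub, hdy]
  ring

/-- for f_y ≡ 0, the Hamiltonian vector field v = 2(f_x + f f_p) ξ₂,
obtained by taking H = f, satisfies ∇_v v = 0 (∇ the Levi-Civita connection of g);
equivalently 2 v(g(v,Z)) − Z(g(v,v)) − 2 g([v,Z], v) = 0 for every smooth vector
field Z.  Hence the integral curves of v are geodesics of g. -/
theorem hamiltonian_integral_curves_are_geodesics (f : Pt → ℝ)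
    (hf : ContDiff ℝ (⊤ : ℕ∞) f) (hy : ∀ q, pdy f q = 0) :
    (∀ q, nabla f (fun r => (2 * (pdx f r + f r * pdp f r)) • ξ2 r)
        (fun r => (2 * (pdx f r + f r * pdp f r)) • ξ2 r) q = 0) ∧
    (∀ Z : VF, SmoothVF Z → ∀ q,
      2 * vderiv (fun r => (2 * (pdx f r + f r * pdp f r)) • ξ2 r)
            (gMet f (fun r => (2 * (pdx f r + f r * pdp f r)) • ξ2 r) Z) q
        - vderiv Z (gMet f (fun r => (2 * (pdx f r + f r * pdp f r)) • ξ2 r)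
            (fun r => (2 * (pdx f r + f r * pdp f r)) • ξ2 r)) q
        - 2 * gMet f (lie (fun r => (2 * (pdx f r + f r * pdp f r)) • ξ2 r) Z)
            (fun r => (2 * (pdx f r + f r * pdp f r)) • ξ2 r) q = 0) := by
  have hkey : ∀ (Z : VF) (q : Pt), DifferentiableAt ℝ Z q →
      2 * vderiv (fun r => (2 * (pdx f r + f r * pdp f r)) • ξ2 r)
            (gMet f (fun r => (2 * (pdx f r + f r * pdp f r)) • ξ2 r) Z) q
        - vderiv Z (gMet f (fun r => (2 * (pdx f r + f r * pdp f r)) • ξ2 r)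
            (fun r => (2 * (pdx f r + f r * pdp f r)) • ξ2 r)) q
        - 2 * gMet f (lie (fun r => (2 * (pdx f r + f r * pdp f r)) • ξ2 r) Z)
            (fun r => (2 * (pdx f r + f r * pdp f r)) • ξ2 r) q = 0 := by
    intro Z q hZq
    exact key_gen f (fun r => 2 * (pdx f r + f r * pdp f r)) q (aux_h_diff hf q)
      (aux_h_y hf hy q _) Z hZq
  constructor
  · intro q
    have hK : ∀ W : VF, DifferentiableAt ℝ W q →
        koszul f (fun r => (2 * (pdx f r + f r * pdp f r)) • ξ2 r)
          (fun r => (2 * (pdx f r + f r * pdp f r)) • ξ2 r) W q = 0 := by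
      intro W hW
      have hlvv : gMet f (lie (fun r => (2 * (pdx f r + f r * pdp f r)) • ξ2 r)
          (fun r => (2 * (pdx f r + f r * pdp f r)) • ξ2 r)) W q = 0 := by
        simp [gMet, gVal, dot, lie]
      simp only [koszul]
      rw [hlvv]
      have := hkey W q hW
      linarith
    have hxi1 : DifferentiableAt ℝ (ξ1 f) q := by
      refine DifferentiableAt.prodMk (differentiableAt_const _) (DifferentiableAt.prodMk ?_ ?_)
      · exact (differentiableAt_snd.snd).const_mul 2
      · exact ((hf.differentiable (by simp)) q).const_mul 2
    have hxi2 : DifferentiableAt ℝ ξ2 q := differentiableAt_const _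
    have hxi3 : DifferentiableAt ℝ ξ3 q := differentiableAt_const _
    simp only [nabla]
    rw [hK (ξ1 f) hxi1, hK ξ2 hxi2, hK ξ3 hxi3]
    simp
  · intro Z hZ q
    exact hkey Z q ((hZ.differentiable (by simp)) q)
end
end

section
/- Assume f depends only on x, and let F be an antiderivative of f (F' = f). Set H = x/2 and H₁ = (1/2)F − p/2. Then the Reeb vector field ξ₂ has the compatible bi-Hamiltonian representation ξ₂ = ξ₃ × ∇H = ξ₁ × ∇H₁; explicitly, ∇H = ξ₁, ∇H₁ = −ξ₃, ξ₃ × ξ₁ = ξ₂, and ξ₁ × (−ξ₃) = ξ₂. In particular the independent variable x (up to the factor 1/2) is a Hamiltonian function for the Reeb vector field ξ₂. -/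
/-!
Concrete model of the geometry of a second order ODE  y'' = f(x, y, y')
on Σ = ℝ³ with coordinates (x, y, p):

* a vector field is given by its components w.r.t. (∂x, ∂y, ∂p);
* a 1-form by its components w.r.t. (dx, dy, dp);
* a 2-form by its components w.r.t. (dy∧dp, dp∧dx, dx∧dy);
* a 3-form by its coefficient w.r.t. dx∧dy∧dp.
-/

noncomputable section

lemma fderiv_H (q v : Pt) : fderiv ℝ (fun r : Pt => r.1 / 2) q v = v.1 / 2 := by
  have h := (hasFDerivAt_fst (𝕜 := ℝ) (p := q)).mul_const (2⁻¹ : ℝ)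
  have he : (fun r : Pt => r.1 / 2) = fun r : Pt => r.1 * 2⁻¹ := by
    funext r; ring
  rw [he, h.fderiv]
  simp [div_eq_mul_inv, mul_comm]

lemma fderiv_H1 (F : ℝ → ℝ) (f0 : ℝ → ℝ) (hF : ∀ x, HasDerivAt F (f0 x) x) (q v : Pt) :
    fderiv ℝ (fun r : Pt => F r.1 / 2 - r.2.2 / 2) q v = f0 q.1 * v.1 / 2 - v.2.2 / 2 := by
  have h1 : HasFDerivAt (fun r : Pt => F r.1)
      ((f0 q.1) • (ContinuousLinearMap.fst ℝ ℝ (ℝ × ℝ))) q :=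
    (hF q.1).comp_hasFDerivAt q (hasFDerivAt_fst (𝕜 := ℝ) (p := q))
  have h2 : HasFDerivAt (fun r : Pt => r.2.2)
      ((ContinuousLinearMap.snd ℝ ℝ ℝ).comp (ContinuousLinearMap.snd ℝ ℝ (ℝ × ℝ))) q :=
    (hasFDerivAt_snd (𝕜 := ℝ)).comp q (hasFDerivAt_snd (𝕜 := ℝ) (p := q))
  have h := (h1.mul_const (2⁻¹ : ℝ)).sub (h2.mul_const (2⁻¹ : ℝ))
  have he : (fun r : Pt => F r.1 / 2 - r.2.2 / 2) = fun r : Pt => F r.1 * 2⁻¹ - r.2.2 * 2⁻¹ := by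
    funext r; ring
  rw [he, HasFDerivAt.fderiv (f := fun r : Pt => F r.1 * 2⁻¹ - r.2.2 * 2⁻¹) h]
  simp [div_eq_mul_inv]
  ring

/-- for y'' = f(x) with f a smooth function of x alone and F an
antiderivative of f, setting H = x/2 and H₁ = F/2 − p/2, the Reeb vector field ξ₂ has
the compatible bi-Hamiltonian representation ξ₂ = ξ₃ ×_g ∇H = ξ₁ ×_g ∇H₁; explicitly
∇H = ξ₁, ∇H₁ = −ξ₃, ξ₃ ×_g ξ₁ = ξ₂ and ξ₁ ×_g (−ξ₃) = ξ₂.  In particular the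
independent variable x (up to the factor 1/2) is a Hamiltonian function for ξ₂. -/
theorem reeb_bi_hamiltonian (f0 : ℝ → ℝ) (hf0 : ContDiff ℝ (⊤ : ℕ∞) f0)
    (F : ℝ → ℝ) (hF : ∀ x, HasDerivAt F (f0 x) x) :
    (∀ q, grad (fun r => f0 r.1) (fun r : Pt => r.1 / 2) q = ξ1 (fun r => f0 r.1) q) ∧
    (∀ q, grad (fun r => f0 r.1) (fun r : Pt => F r.1 / 2 - r.2.2 / 2) q = -(ξ3 q)) ∧
    (∀ q, crossg (fun r => f0 r.1) ξ3 (ξ1 (fun r => f0 r.1)) q = ξ2 q) ∧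
    (∀ q, crossg (fun r => f0 r.1) (ξ1 (fun r => f0 r.1)) (fun r => -(ξ3 r)) q = ξ2 q) ∧
    (∀ q, ξ2 q = crossg (fun r => f0 r.1) ξ3
        (grad (fun r => f0 r.1) (fun r : Pt => r.1 / 2)) q) ∧
    (∀ q, ξ2 q = crossg (fun r => f0 r.1) (ξ1 (fun r => f0 r.1))
        (grad (fun r => f0 r.1) (fun r : Pt => F r.1 / 2 - r.2.2 / 2)) q) := by
  have hH : ∀ q, grad (fun r => f0 r.1) (fun r : Pt => r.1 / 2) q = ξ1 (fun r => f0 r.1) q := by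
    intro q
    simp only [grad, vderiv, fderiv_H, ξ1, ξ2, ξ3, Prod.smul_def, smul_eq_mul, Prod.mk_add_mk,
      Prod.mk.injEq]
    norm_num
  have hH1 : ∀ q, grad (fun r => f0 r.1) (fun r : Pt => F r.1 / 2 - r.2.2 / 2) q = -(ξ3 q) := by
    intro q
    simp only [grad, vderiv, fderiv_H1 F f0 hF, ξ1, ξ2, ξ3, Prod.smul_def, smul_eq_mul,
      Prod.mk_add_mk, Prod.neg_mk, Prod.mk.injEq]
    norm_num
  have hvol : ∀ q, volg (fun r => f0 r.1) q = 1/8 := by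
    intro q
    simp only [volg, w12, w11, η1, η2, η3, cross, dot]
    ring
  have hc1 : ∀ q, crossg (fun r => f0 r.1) ξ3 (ξ1 (fun r => f0 r.1)) q = ξ2 q := by
    intro q
    simp only [crossg, hvol, ξ1, ξ2, ξ3, cross, dot, Prod.smul_def, smul_eq_mul,
      Prod.mk_add_mk, Prod.mk.injEq]
    refine ⟨by ring, by ring, by ring⟩
  have hc2 : ∀ q, crossg (fun r => f0 r.1) (ξ1 (fun r => f0 r.1)) (fun r => -(ξ3 r)) q = ξ2 q := by
    intro q
    simp only [crossg, hvol, ξ1, ξ2, ξ3, cross, dot, Prod.neg_mk, Prod.smul_def, smul_eq_mul,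
      Prod.mk_add_mk, Prod.mk.injEq]
    refine ⟨by ring, by ring, by ring⟩
  refine ⟨hH, hH1, hc1, hc2, fun q => ?_, fun q => ?_⟩
  · rw [show grad (fun r => f0 r.1) (fun r : Pt => r.1 / 2)
        = ξ1 (fun r => f0 r.1) from funext hH]
    exact (hc1 q).symm
  · rw [show grad (fun r => f0 r.1) (fun r : Pt => F r.1 / 2 - r.2.2 / 2)
        = fun r => -(ξ3 r) from funext hH1]
    exact (hc2 q).symm
end
end
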